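/- Let b ≥ 2 and n ≥ 1 be integers and let R_n be a generalized Hammersley point set with parameter a_n, and let D be its discrepancy function. Then ∫_{[0,1)²} D(x₁,x₂) dx₁dx₂ = (1/4)b^{−2n} + (1/2)b^{−n} + (2a_n − n)·((b² − 1)/12)·b^{−n−1}. -/

import Mathlib

open scoped Classical
open Finset MeasureTheory

/-- First coordinate of the generalized Hammersley point: `z₁ = tₙ/b + ⋯ + t₁/bⁿ`. -/
noncomputable def z1 (b n : ℕ) (t : Fin n → Fin b) : ℝ :=
  ∑ i : Fin n, ((t i : ℕ) : ℝ) / (b:ℝ) ^ (n - (i:ℕ))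

/-- Second coordinate: `z₂ = s₁(t₁)/b + s₂(t₂)/b² + ⋯ + sₙ(tₙ)/bⁿ`. -/
noncomputable def z2 (b n : ℕ) (s : Fin n → ℕ → ℕ) (t : Fin n → Fin b) : ℝ :=
  ∑ i : Fin n, ((s i (t i : ℕ) : ℕ) : ℝ) / (b:ℝ) ^ ((i:ℕ) + 1)

/-- Each `s i` is either the identity or the reflection `t ↦ b−1−t` on digits. -/
def IsDigitMaps (b n : ℕ) (s : Fin n → ℕ → ℕ) : Prop :=
  ∀ i, (∀ k, k < b → s i k = k) ∨ (∀ k, k < b → s i k = b - 1 - k)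

/-- The number `a_n` of indices `i` for which `s i` is the identity on digits. -/
noncomputable def aCount (b n : ℕ) (s : Fin n → ℕ → ℕ) : ℕ :=
  (Finset.univ.filter (fun i : Fin n => ∀ k, k < b → s i k = k)).card

/-- The discrepancy function of the generalized Hammersley point set. -/
noncomputable def disc (b n : ℕ) (s : Fin n → ℕ → ℕ) (x₁ x₂ : ℝ) : ℝ :=
  (b:ℝ) ^ (-(n:ℤ)) *
      ∑ t : Fin n → Fin b,
        (if z1 b n t < x₁ then (1:ℝ) else 0) * (if z2 b n s t < x₂ then (1:ℝ) else 0)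
    - x₁ * x₂


lemma master {n b : ℕ} (h : Fin n → Fin b → ℝ) :
    ∑ t : Fin n → Fin b, ∏ i, h i (t i) = ∏ i, ∑ k, h i k :=
  (Fintype.prod_sum h).symm

lemma L1 {n b : ℕ} (hb : (b:ℝ) ≠ 0) (i₀ : Fin n) (F : Fin b → ℝ) :
    ∑ t : Fin n → Fin b, F (t i₀) = ((b:ℝ)^n / (b:ℝ)) * ∑ k, F k := by
  have hm := master (fun i k => if i = i₀ then F k else (1:ℝ))
  calc ∑ t : Fin n → Fin b, F (t i₀)
      = ∑ t : Fin n → Fin b, ∏ i, (if i = i₀ then F (t i) else (1:ℝ)) := by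
        refine Finset.sum_congr rfl fun t _ => ?_
        rw [Finset.prod_ite_eq' Finset.univ i₀ (fun i => F (t i))]
        simp
    _ = ∏ i : Fin n, ∑ k : Fin b, (if i = i₀ then F k else (1:ℝ)) := hm
    _ = ∏ i : Fin n, (if i = i₀ then ∑ k, F k else (b:ℝ)) := by
        refine Finset.prod_congr rfl fun i _ => ?_
        by_cases h : i = i₀ <;> simp [h]
    _ = ((b:ℝ)^n / (b:ℝ)) * ∑ k, F k := by
        rw [← Finset.mul_prod_erase Finset.univ _ (Finset.mem_univ i₀)]
        rw [if_pos rfl]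
        have : ∀ i ∈ Finset.univ.erase i₀, (if i = i₀ then ∑ k, F k else (b:ℝ)) = (b:ℝ) := by
          intro i hi; rw [if_neg (Finset.mem_erase.1 hi).1]
        rw [Finset.prod_congr rfl this, Finset.prod_const, Finset.card_erase_of_mem (Finset.mem_univ i₀)]
        have hn : 1 ≤ n := Fin.pos i₀
        rw [Finset.card_univ, Fintype.card_fin]
        rw [pow_sub₀ _ hb hn, pow_one]; ring

lemma L2 {n b : ℕ} (hb : (b:ℝ) ≠ 0) (i₀ j₀ : Fin n) (hij : i₀ ≠ j₀) (F G : Fin b → ℝ) :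
    ∑ t : Fin n → Fin b, F (t i₀) * G (t j₀)
      = ((b:ℝ)^n / (b:ℝ)^2) * (∑ k, F k) * (∑ k, G k) := by
  have hm := master (fun i k => if i = i₀ then F k else if i = j₀ then G k else (1:ℝ))
  have hn2 : 2 ≤ n := by
    by_contra h
    push_neg at h
    interval_cases n
    · exact i₀.elim0
    · exact hij (Subsingleton.elim i₀ j₀)
  calc ∑ t : Fin n → Fin b, F (t i₀) * G (t j₀)
      = ∑ t : Fin n → Fin b, ∏ i, (if i = i₀ then F (t i) else if i = j₀ then G (t i) else (1:ℝ)) := by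
        refine Finset.sum_congr rfl fun t _ => ?_
        rw [← Finset.mul_prod_erase Finset.univ _ (Finset.mem_univ i₀), if_pos rfl]
        have hj : j₀ ∈ Finset.univ.erase i₀ := Finset.mem_erase.2 ⟨hij.symm, Finset.mem_univ _⟩
        rw [← Finset.mul_prod_erase _ _ hj, if_neg (Ne.symm hij), if_pos rfl]
        have : ∀ i ∈ (Finset.univ.erase i₀).erase j₀,
            (if i = i₀ then F (t i) else if i = j₀ then G (t i) else (1:ℝ)) = 1 := by
          intro i hi
          rcases Finset.mem_erase.1 hi with ⟨hi1, hi2⟩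
          rcases Finset.mem_erase.1 hi2 with ⟨hi3, _⟩
          rw [if_neg hi3, if_neg hi1]
        rw [Finset.prod_congr rfl this, Finset.prod_const_one, mul_one]
    _ = ∏ i : Fin n, ∑ k : Fin b, (if i = i₀ then F k else if i = j₀ then G k else (1:ℝ)) := hm
    _ = ∏ i : Fin n, (if i = i₀ then ∑ k, F k else if i = j₀ then ∑ k, G k else (b:ℝ)) := by
        refine Finset.prod_congr rfl fun i _ => ?_
        by_cases h1 : i = i₀
        · simp [h1]
        · by_cases h2 : i = j₀ <;> simp [h1, h2]
    _ = ((b:ℝ)^n / (b:ℝ)^2) * (∑ k, F k) * (∑ k, G k) := by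
        rw [← Finset.mul_prod_erase Finset.univ _ (Finset.mem_univ i₀), if_pos rfl]
        have hj : j₀ ∈ Finset.univ.erase i₀ := Finset.mem_erase.2 ⟨hij.symm, Finset.mem_univ _⟩
        rw [← Finset.mul_prod_erase _ _ hj, if_neg (Ne.symm hij), if_pos rfl]
        have : ∀ i ∈ (Finset.univ.erase i₀).erase j₀,
            (if i = i₀ then ∑ k, F k else if i = j₀ then ∑ k, G k else (b:ℝ)) = (b:ℝ) := by
          intro i hi
          rcases Finset.mem_erase.1 hi with ⟨hi1, hi2⟩
          rcases Finset.mem_erase.1 hi2 with ⟨hi3, _⟩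
          rw [if_neg hi3, if_neg hi1]
        rw [Finset.prod_congr rfl this, Finset.prod_const,
          Finset.card_erase_of_mem hj, Finset.card_erase_of_mem (Finset.mem_univ i₀),
          Finset.card_univ, Fintype.card_fin]
        have : n - 1 - 1 = n - 2 := by omega
        rw [this, pow_sub₀ _ hb hn2]
        ring

lemma gsum2 {b n : ℕ} (hb : 2 ≤ b) :
    ∑ i : Fin n, (((b:ℝ)^((i:ℕ)+1))⁻¹) = (1 - ((b:ℝ)^n)⁻¹)/((b:ℝ)-1) := by
  have hb0 : (b:ℝ) ≠ 0 := by positivity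
  have hb1 : (b:ℝ) ≠ 1 := by
    have : (2:ℝ) ≤ (b:ℝ) := by exact_mod_cast hb
    linarith
  have hbi : (b:ℝ)⁻¹ ≠ 1 := by
    rw [ne_eq, inv_eq_one]; exact hb1
  rw [Fin.sum_univ_eq_sum_range (fun i => (((b:ℝ)^(i+1))⁻¹))]
  have : ∀ i ∈ Finset.range n, (((b:ℝ)^(i+1))⁻¹) = (b:ℝ)⁻¹ * ((b:ℝ)⁻¹)^i := by
    intro i _
    rw [pow_succ, mul_inv, inv_pow]; ring
  rw [Finset.sum_congr rfl this, ← Finset.mul_sum, geom_sum_eq hbi]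
  have hbn : (b:ℝ)^n ≠ 0 := pow_ne_zero _ hb0
  rw [inv_pow]
  have h1 : (b:ℝ)⁻¹ - 1 ≠ 0 := sub_ne_zero.2 hbi
  have h2 : (b:ℝ) - 1 ≠ 0 := sub_ne_zero.2 hb1
  rw [mul_comm, div_mul_eq_mul_div, div_eq_div_iff h1 h2]
  field_simp
  ring

lemma gsum1 {b n : ℕ} (hb : 2 ≤ b) :
    ∑ i : Fin n, (((b:ℝ)^(n-(i:ℕ)))⁻¹) = (1 - ((b:ℝ)^n)⁻¹)/((b:ℝ)-1) := by
  rw [Fin.sum_univ_eq_sum_range (fun i => (((b:ℝ)^(n-i))⁻¹))]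
  have h := Finset.sum_range_reflect (fun j => (((b:ℝ)^(j+1))⁻¹)) n
  have h2 : ∑ j ∈ Finset.range n, (((b:ℝ)^(n-1-j+1))⁻¹) = ∑ j ∈ Finset.range n, (((b:ℝ)^(n-j))⁻¹) := by
    refine Finset.sum_congr rfl fun j hj => ?_
    have : n - 1 - j + 1 = n - j := by
      have := Finset.mem_range.1 hj; omega
    rw [this]
  rw [← h2, h, ← Fin.sum_univ_eq_sum_range (fun i => (((b:ℝ)^(i+1))⁻¹))]
  exact gsum2 hb

lemma sum_id_range (m : ℕ) : ∑ k ∈ Finset.range m, (k:ℝ) = (m:ℝ)*((m:ℝ)-1)/2 := by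
  induction m with
  | zero => simp
  | succ p ih => rw [Finset.sum_range_succ, ih]; push_cast; ring

lemma sum_sq_range (m : ℕ) : ∑ k ∈ Finset.range m, (k:ℝ)*(k:ℝ) = (m:ℝ)*((m:ℝ)-1)*(2*(m:ℝ)-1)/6 := by
  induction m with
  | zero => simp
  | succ p ih => rw [Finset.sum_range_succ, ih]; push_cast; ring

lemma sum_fin_id {b : ℕ} : ∑ k : Fin b, ((k:ℕ):ℝ) = (b:ℝ)*((b:ℝ)-1)/2 := by
  rw [Fin.sum_univ_eq_sum_range (fun k => ((k:ℕ):ℝ))]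
  exact sum_id_range b

lemma digit_sum {b : ℕ} (hb : 2 ≤ b) (σ : ℕ → ℕ)
    (hσ : (∀ k, k < b → σ k = k) ∨ (∀ k, k < b → σ k = b - 1 - k)) :
    ∑ k : Fin b, ((σ (k:ℕ) : ℕ):ℝ) = (b:ℝ)*((b:ℝ)-1)/2 := by
  rcases hσ with h | h
  · have : ∀ k : Fin b, ((σ (k:ℕ) : ℕ):ℝ) = ((k:ℕ):ℝ) := fun k => by rw [h _ k.isLt]
    rw [Finset.sum_congr rfl (fun k _ => this k)]
    exact sum_fin_id
  · have : ∀ k : Fin b, ((σ (k:ℕ) : ℕ):ℝ) = ((b:ℝ)-1) - ((k:ℕ):ℝ) := by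
      intro k
      rw [h _ k.isLt]
      have hk : (k:ℕ) ≤ b - 1 := by omega
      push_cast [Nat.cast_sub hk, Nat.cast_sub (by omega : 1 ≤ b)]
      ring
    rw [Finset.sum_congr rfl (fun k _ => this k), Finset.sum_sub_distrib,
      Finset.sum_const, sum_fin_id, Finset.card_univ, Fintype.card_fin]
    push_cast
    ring

lemma diag_sum {b : ℕ} (hb : 2 ≤ b) (σ : ℕ → ℕ) :
    ((∀ k, k < b → σ k = k) →
      ∑ k : Fin b, ((k:ℕ):ℝ) * ((σ (k:ℕ) : ℕ):ℝ) = (b:ℝ)*((b:ℝ)-1)*(2*(b:ℝ)-1)/6)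
    ∧ ((∀ k, k < b → σ k = b - 1 - k) →
      ∑ k : Fin b, ((k:ℕ):ℝ) * ((σ (k:ℕ) : ℕ):ℝ) = (b:ℝ)*((b:ℝ)-1)*((b:ℝ)-2)/6) := by
  constructor
  · intro h
    have : ∀ k : Fin b, ((k:ℕ):ℝ) * ((σ (k:ℕ) : ℕ):ℝ) = ((k:ℕ):ℝ) * ((k:ℕ):ℝ) :=
      fun k => by rw [h _ k.isLt]
    rw [Finset.sum_congr rfl (fun k _ => this k),
      Fin.sum_univ_eq_sum_range (fun k => (k:ℝ)*(k:ℝ))]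
    exact sum_sq_range b
  · intro h
    have : ∀ k : Fin b, ((k:ℕ):ℝ) * ((σ (k:ℕ) : ℕ):ℝ)
        = ((b:ℝ)-1) * ((k:ℕ):ℝ) - ((k:ℕ):ℝ) * ((k:ℕ):ℝ) := by
      intro k
      rw [h _ k.isLt]
      have hk : (k:ℕ) ≤ b - 1 := by omega
      push_cast [Nat.cast_sub hk, Nat.cast_sub (by omega : 1 ≤ b)]
      ring
    rw [Finset.sum_congr rfl (fun k _ => this k), Finset.sum_sub_distrib, ← Finset.mul_sum,
      sum_fin_id, Fin.sum_univ_eq_sum_range (fun k => (k:ℝ)*(k:ℝ)), sum_sq_range]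
    ring

lemma ind_eq (z : ℝ) : (fun x => if z < x then (1:ℝ) else 0) = (Set.Ioi z).indicator (fun _ => 1) := by
  funext x
  simp [Set.indicator, Set.mem_Ioi]

lemma integrable_ind (z : ℝ) :
    IntegrableOn (fun x => if z < x then (1:ℝ) else 0) (Set.Ico (0:ℝ) 1) := by
  rw [ind_eq]
  exact (integrableOn_const (by simp [Real.volume_Ico])).indicator measurableSet_Ioi

lemma integral_ind (z : ℝ) (h0 : 0 ≤ z) (h1 : z ≤ 1) :
    ∫ x in Set.Ico (0:ℝ) 1, (if z < x then (1:ℝ) else 0) = 1 - z := by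
  rw [show (fun x => if z < x then (1:ℝ) else 0) = (Set.Ioi z).indicator (fun _ => 1) from ind_eq z]
  rw [MeasureTheory.setIntegral_indicator measurableSet_Ioi]
  have hset : Set.Ico (0:ℝ) 1 ∩ Set.Ioi z = Set.Ioo z 1 := by
    ext x
    simp only [Set.mem_inter_iff, Set.mem_Ico, Set.mem_Ioi, Set.mem_Ioo]
    constructor
    · rintro ⟨⟨_, hx1⟩, hx2⟩; exact ⟨hx2, hx1⟩
    · rintro ⟨hx1, hx2⟩; exact ⟨⟨le_trans h0 hx1.le, hx2⟩, hx1⟩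
  rw [hset, MeasureTheory.setIntegral_const, Real.volume_real_Ioo_of_le h1, smul_eq_mul, mul_one]

lemma integrable_linear : IntegrableOn (fun x : ℝ => x) (Set.Ico (0:ℝ) 1) := by
  have : IntegrableOn (fun x : ℝ => x) (Set.Icc (0:ℝ) 1) := by
    apply Continuous.integrableOn_Icc
    exact continuous_id
  exact this.mono_set Set.Ico_subset_Icc_self

lemma integral_linear : ∫ x in Set.Ico (0:ℝ) 1, x = 1/2 := by
  rw [MeasureTheory.integral_Ico_eq_integral_Ioo, ← MeasureTheory.integral_Ioc_eq_integral_Ioo,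
    ← intervalIntegral.integral_of_le (by norm_num : (0:ℝ) ≤ 1),
    integral_id]
  norm_num

lemma z1_nonneg {b n : ℕ} (t : Fin n → Fin b) : 0 ≤ z1 b n t :=
  Finset.sum_nonneg fun i _ => by positivity

lemma z1_le_one {b n : ℕ} (hb : 2 ≤ b) (t : Fin n → Fin b) : z1 b n t ≤ 1 := by
  have hb0 : (0:ℝ) < (b:ℝ) := by positivity
  have hb1 : (1:ℝ) < (b:ℝ) := by exact_mod_cast (by omega : 1 < b)
  have h1 : z1 b n t ≤ ∑ i : Fin n, ((b:ℝ)-1) * (((b:ℝ)^(n-(i:ℕ)))⁻¹) := by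
    refine Finset.sum_le_sum fun i _ => ?_
    rw [div_eq_mul_inv]
    have : ((t i : ℕ):ℝ) ≤ (b:ℝ) - 1 := by
      have := (t i).isLt
      have : ((t i : ℕ):ℝ) ≤ ((b - 1 : ℕ):ℝ) := by exact_mod_cast (by omega : (t i : ℕ) ≤ b - 1)
      rw [Nat.cast_sub (by omega : 1 ≤ b)] at this
      simpa using this
    exact mul_le_mul_of_nonneg_right this (by positivity)
  rw [← Finset.mul_sum, gsum1 hb] at h1
  have hbn : (0:ℝ) < ((b:ℝ)^n)⁻¹ := by positivity
  have hne : (b:ℝ) - 1 ≠ 0 := by linarith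
  have : ((b:ℝ)-1) * ((1 - ((b:ℝ)^n)⁻¹)/((b:ℝ)-1)) = 1 - ((b:ℝ)^n)⁻¹ := by
    rw [mul_comm, div_mul_cancel₀ _ hne]
  rw [this] at h1
  linarith

lemma z2_nonneg {b n : ℕ} (s : Fin n → ℕ → ℕ) (t : Fin n → Fin b) : 0 ≤ z2 b n s t :=
  Finset.sum_nonneg fun i _ => by positivity

lemma z2_le_one {b n : ℕ} (hb : 2 ≤ b) (s : Fin n → ℕ → ℕ) (hs : IsDigitMaps b n s)
    (t : Fin n → Fin b) : z2 b n s t ≤ 1 := by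
  have h1 : z2 b n s t ≤ ∑ i : Fin n, ((b:ℝ)-1) * (((b:ℝ)^((i:ℕ)+1))⁻¹) := by
    refine Finset.sum_le_sum fun i _ => ?_
    rw [div_eq_mul_inv]
    have hsle : s i (t i : ℕ) ≤ b - 1 := by
      rcases hs i with h | h
      · rw [h _ (t i).isLt]; have := (t i).isLt; omega
      · rw [h _ (t i).isLt]; omega
    have : ((s i (t i : ℕ) : ℕ):ℝ) ≤ (b:ℝ) - 1 := by
      have : ((s i (t i : ℕ) : ℕ):ℝ) ≤ ((b - 1 : ℕ):ℝ) := by exact_mod_cast hsle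
      rw [Nat.cast_sub (by omega : 1 ≤ b)] at this
      simpa using this
    exact mul_le_mul_of_nonneg_right this (by positivity)
  rw [← Finset.mul_sum, gsum2 hb] at h1
  have hbn : (0:ℝ) < ((b:ℝ)^n)⁻¹ := by positivity
  have hb1 : (1:ℝ) < (b:ℝ) := by exact_mod_cast (by omega : 1 < b)
  have hne : (b:ℝ) - 1 ≠ 0 := by linarith
  have : ((b:ℝ)-1) * ((1 - ((b:ℝ)^n)⁻¹)/((b:ℝ)-1)) = 1 - ((b:ℝ)^n)⁻¹ := by
    rw [mul_comm, div_mul_cancel₀ _ hne]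
  rw [this] at h1
  linarith

lemma integral_reduction {b n : ℕ} (hb : 2 ≤ b) (s : Fin n → ℕ → ℕ) (hs : IsDigitMaps b n s) :
    (∫ x₁ in Set.Ico (0:ℝ) 1, ∫ x₂ in Set.Ico (0:ℝ) 1, disc b n s x₁ x₂)
      = (b:ℝ)^(-(n:ℤ)) * (∑ t : Fin n → Fin b, (1 - z1 b n t) * (1 - z2 b n s t)) - 1/4 := by
  have inner : ∀ x₁ : ℝ, (∫ x₂ in Set.Ico (0:ℝ) 1, disc b n s x₁ x₂)
      = (b:ℝ)^(-(n:ℤ)) * (∑ t : Fin n → Fin b,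
          (if z1 b n t < x₁ then (1:ℝ) else 0) * (1 - z2 b n s t)) - x₁ * (1/2) := by
    intro x₁
    unfold disc
    rw [MeasureTheory.integral_sub]
    · congr 1
      · rw [MeasureTheory.integral_const_mul]
        congr 1
        rw [MeasureTheory.integral_finset_sum]
        · refine Finset.sum_congr rfl fun t _ => ?_
          rw [MeasureTheory.integral_const_mul,
            integral_ind _ (z2_nonneg s t) (z2_le_one hb s hs t)]
        · intro t _
          exact (integrable_ind (z2 b n s t)).const_mul _
      · rw [MeasureTheory.integral_const_mul, integral_linear]
    · refine Integrable.const_mul ?_ _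
      refine MeasureTheory.integrable_finset_sum _ fun t _ => ?_
      exact (integrable_ind (z2 b n s t)).const_mul _
    · exact integrable_linear.const_mul _
  rw [MeasureTheory.setIntegral_congr_fun measurableSet_Ico (fun x _ => inner x)]
  rw [MeasureTheory.integral_sub]
  · congr 1
    · rw [MeasureTheory.integral_const_mul]
      congr 1
      rw [MeasureTheory.integral_finset_sum]
      · refine Finset.sum_congr rfl fun t _ => ?_
        rw [MeasureTheory.integral_mul_const,
          integral_ind _ (z1_nonneg t) (z1_le_one hb t)]
      · intro t _
        exact (integrable_ind (z1 b n t)).mul_const _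
    · rw [MeasureTheory.integral_mul_const, integral_linear]
      norm_num
  · refine Integrable.const_mul ?_ _
    refine MeasureTheory.integrable_finset_sum _ fun t _ => ?_
    exact (integrable_ind (z1 b n t)).mul_const _
  · exact integrable_linear.mul_const _

lemma sum_z1 {b n : ℕ} (hb : 2 ≤ b) :
    ∑ t : Fin n → Fin b, z1 b n t
      = ((b:ℝ)^n/(b:ℝ)) * ((b:ℝ)*((b:ℝ)-1)/2) * ((1 - ((b:ℝ)^n)⁻¹)/((b:ℝ)-1)) := by
  have hb0 : (b:ℝ) ≠ 0 := by positivity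
  unfold z1
  rw [Finset.sum_comm]
  have step : ∀ i : Fin n, (∑ t : Fin n → Fin b, ((t i:ℕ):ℝ) / (b:ℝ)^(n-(i:ℕ)))
      = (((b:ℝ)^n/(b:ℝ)) * ((b:ℝ)*((b:ℝ)-1)/2)) * (((b:ℝ)^(n-(i:ℕ)))⁻¹) := by
    intro i
    simp_rw [div_eq_mul_inv]
    rw [← Finset.sum_mul, L1 hb0 i (fun k => ((k:ℕ):ℝ)), sum_fin_id]
    ring
  rw [Finset.sum_congr rfl (fun i _ => step i), ← Finset.mul_sum, gsum1 hb]

lemma sum_z2 {b n : ℕ} (hb : 2 ≤ b) (s : Fin n → ℕ → ℕ) (hs : IsDigitMaps b n s) :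
    ∑ t : Fin n → Fin b, z2 b n s t
      = ((b:ℝ)^n/(b:ℝ)) * ((b:ℝ)*((b:ℝ)-1)/2) * ((1 - ((b:ℝ)^n)⁻¹)/((b:ℝ)-1)) := by
  have hb0 : (b:ℝ) ≠ 0 := by positivity
  unfold z2
  rw [Finset.sum_comm]
  have step : ∀ i : Fin n, (∑ t : Fin n → Fin b, ((s i ((t i : Fin b):ℕ) : ℕ):ℝ) / (b:ℝ)^((i:ℕ)+1))
      = (((b:ℝ)^n/(b:ℝ)) * ((b:ℝ)*((b:ℝ)-1)/2)) * (((b:ℝ)^((i:ℕ)+1))⁻¹) := by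
    intro i
    simp_rw [div_eq_mul_inv]
    rw [← Finset.sum_mul, L1 hb0 i (fun k : Fin b => ((s i (k:ℕ) : ℕ):ℝ)),
      digit_sum hb (s i) (hs i)]
    ring
  rw [Finset.sum_congr rfl (fun i _ => step i), ← Finset.mul_sum, gsum2 hb]

lemma sum_Q {b n : ℕ} (hb : 2 ≤ b) (s : Fin n → ℕ → ℕ) (hs : IsDigitMaps b n s) :
    ∑ i : Fin n, (∑ k : Fin b, ((k:ℕ):ℝ) * ((s i (k:ℕ) : ℕ):ℝ))
      = (aCount b n s : ℝ) * ((b:ℝ)*((b:ℝ)-1)*(2*(b:ℝ)-1)/6)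
        + ((n:ℝ) - (aCount b n s : ℝ)) * ((b:ℝ)*((b:ℝ)-1)*((b:ℝ)-2)/6) := by
  classical
  rw [← Finset.sum_filter_add_sum_filter_not Finset.univ
    (fun i : Fin n => ∀ k, k < b → s i k = k)]
  have h1 : ∀ i ∈ Finset.univ.filter (fun i : Fin n => ∀ k, k < b → s i k = k),
      (∑ k : Fin b, ((k:ℕ):ℝ) * ((s i (k:ℕ) : ℕ):ℝ)) = (b:ℝ)*((b:ℝ)-1)*(2*(b:ℝ)-1)/6 := by
    intro i hi
    exact (diag_sum hb (s i)).1 (Finset.mem_filter.1 hi).2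
  have h2 : ∀ i ∈ Finset.univ.filter (fun i : Fin n => ¬ ∀ k, k < b → s i k = k),
      (∑ k : Fin b, ((k:ℕ):ℝ) * ((s i (k:ℕ) : ℕ):ℝ)) = (b:ℝ)*((b:ℝ)-1)*((b:ℝ)-2)/6 := by
    intro i hi
    refine (diag_sum hb (s i)).2 ?_
    rcases hs i with h | h
    · exact absurd h (Finset.mem_filter.1 hi).2
    · exact h
  rw [Finset.sum_congr rfl h1, Finset.sum_congr rfl h2, Finset.sum_const, Finset.sum_const]
  have hcard : (Finset.univ.filter (fun i : Fin n => ∀ k, k < b → s i k = k)).card = aCount b n s := by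
    unfold aCount
    congr 1
  have hcard2 : (Finset.univ.filter (fun i : Fin n => ¬ ∀ k, k < b → s i k = k)).card
      = n - aCount b n s := by
    have := Finset.card_filter_add_card_filter_not (s := (Finset.univ : Finset (Fin n)))
      (p := fun i : Fin n => ∀ k, k < b → s i k = k)
    rw [Finset.card_univ, Fintype.card_fin] at this
    omega
  rw [hcard, hcard2, nsmul_eq_mul, nsmul_eq_mul]
  have hle : aCount b n s ≤ n := by
    have : aCount b n s ≤ (Finset.univ : Finset (Fin n)).card := Finset.card_filter_le _ _
    rwa [Finset.card_univ, Fintype.card_fin] at this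
  rw [Nat.cast_sub hle]

lemma sum_z12 {b n : ℕ} (hb : 2 ≤ b) (s : Fin n → ℕ → ℕ) (hs : IsDigitMaps b n s) :
    ∑ t : Fin n → Fin b, z1 b n t * z2 b n s t
      = ((b:ℝ)^n/(b:ℝ)) * ((b:ℝ)^(n+1))⁻¹ *
          ((aCount b n s : ℝ) * ((b:ℝ)*((b:ℝ)-1)*(2*(b:ℝ)-1)/6)
            + ((n:ℝ) - (aCount b n s:ℝ)) * ((b:ℝ)*((b:ℝ)-1)*((b:ℝ)-2)/6))
        + ((b:ℝ)^n/(b:ℝ)^2) * ((b:ℝ)*((b:ℝ)-1)/2)^2 *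
          (((1 - ((b:ℝ)^n)⁻¹)/((b:ℝ)-1))^2 - (n:ℝ) * ((b:ℝ)^(n+1))⁻¹) := by
  classical
  have hb0 : (b:ℝ) ≠ 0 := by positivity
  have pairinv : ∀ i : Fin n, ((b:ℝ)^(n-(i:ℕ)))⁻¹ * (((b:ℝ)^((i:ℕ)+1))⁻¹) = ((b:ℝ)^(n+1))⁻¹ := by
    intro i
    rw [← mul_inv, ← pow_add]
    congr 2
    have := i.isLt
    omega
  set σ : ℝ := (b:ℝ)*((b:ℝ)-1)/2 with hσ
  set g : ℝ := (1 - ((b:ℝ)^n)⁻¹)/((b:ℝ)-1) with hg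
  -- the inner double sum representation
  have expand : ∀ t : Fin n → Fin b, z1 b n t * z2 b n s t
      = ∑ i : Fin n, ∑ j : Fin n,
          ((((t i:ℕ)):ℝ) * ((s j ((t j:ℕ)) : ℕ):ℝ))
            * ((((b:ℝ)^(n-(i:ℕ)))⁻¹) * (((b:ℝ)^((j:ℕ)+1))⁻¹)) := by
    intro t
    unfold z1 z2
    rw [Finset.sum_mul_sum]
    refine Finset.sum_congr rfl fun i _ => Finset.sum_congr rfl fun j _ => ?_
    rw [div_mul_div_comm, div_eq_mul_inv, mul_inv]
  rw [Finset.sum_congr rfl (fun t _ => expand t), Finset.sum_comm]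
  rw [Finset.sum_congr rfl (fun i (_ : i ∈ Finset.univ) => Finset.sum_comm)]
  -- now : ∑ i, ∑ j, ∑ t, term
  have Wval_diag : ∀ i : Fin n,
      (∑ t : Fin n → Fin b, ((((t i:ℕ)):ℝ) * ((s i ((t i:ℕ)) : ℕ):ℝ))
          * ((((b:ℝ)^(n-(i:ℕ)))⁻¹) * (((b:ℝ)^((i:ℕ)+1))⁻¹)))
        = ((b:ℝ)^n/(b:ℝ)) * (∑ k : Fin b, ((k:ℕ):ℝ) * ((s i (k:ℕ) : ℕ):ℝ)) * ((b:ℝ)^(n+1))⁻¹ := by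
    intro i
    rw [← Finset.sum_mul, L1 hb0 i (fun k : Fin b => ((k:ℕ):ℝ) * ((s i (k:ℕ) : ℕ):ℝ)), pairinv i]
  have Wval_off : ∀ i j : Fin n, j ≠ i →
      (∑ t : Fin n → Fin b, ((((t i:ℕ)):ℝ) * ((s j ((t j:ℕ)) : ℕ):ℝ))
          * ((((b:ℝ)^(n-(i:ℕ)))⁻¹) * (((b:ℝ)^((j:ℕ)+1))⁻¹)))
        = ((b:ℝ)^n/(b:ℝ)^2) * σ * σ * ((((b:ℝ)^(n-(i:ℕ)))⁻¹) * (((b:ℝ)^((j:ℕ)+1))⁻¹)) := by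
    intro i j hji
    have hmul : ∀ t : Fin n → Fin b,
        (((t i:ℕ)):ℝ) * ((s j ((t j:ℕ)) : ℕ):ℝ)
          = (fun k : Fin b => ((k:ℕ):ℝ)) (t i) * (fun k : Fin b => ((s j (k:ℕ) : ℕ):ℝ)) (t j) :=
      fun t => rfl
    rw [← Finset.sum_mul]
    rw [Finset.sum_congr rfl (fun t _ => hmul t),
      L2 hb0 i j (Ne.symm hji) (fun k : Fin b => ((k:ℕ):ℝ)) (fun k : Fin b => ((s j (k:ℕ) : ℕ):ℝ)),
      sum_fin_id, digit_sum hb (s j) (hs j)]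
  -- split each inner sum over j into the diagonal term and the rest
  have split : ∀ i : Fin n,
      (∑ j : Fin n, ∑ t : Fin n → Fin b, ((((t i:ℕ)):ℝ) * ((s j ((t j:ℕ)) : ℕ):ℝ))
          * ((((b:ℝ)^(n-(i:ℕ)))⁻¹) * (((b:ℝ)^((j:ℕ)+1))⁻¹)))
        = ((b:ℝ)^n/(b:ℝ)) * (∑ k : Fin b, ((k:ℕ):ℝ) * ((s i (k:ℕ) : ℕ):ℝ)) * ((b:ℝ)^(n+1))⁻¹
          + ((b:ℝ)^n/(b:ℝ)^2) * σ * σ *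
            ((((b:ℝ)^(n-(i:ℕ)))⁻¹) * (g - ((b:ℝ)^((i:ℕ)+1))⁻¹)) := by
    intro i
    rw [← Finset.add_sum_erase _ _ (Finset.mem_univ i), Wval_diag i]
    congr 1
    have : ∀ j ∈ Finset.univ.erase i,
        (∑ t : Fin n → Fin b, ((((t i:ℕ)):ℝ) * ((s j ((t j:ℕ)) : ℕ):ℝ))
            * ((((b:ℝ)^(n-(i:ℕ)))⁻¹) * (((b:ℝ)^((j:ℕ)+1))⁻¹)))
          = (((b:ℝ)^n/(b:ℝ)^2) * σ * σ * (((b:ℝ)^(n-(i:ℕ)))⁻¹)) * (((b:ℝ)^((j:ℕ)+1))⁻¹) := by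
      intro j hj
      rw [Wval_off i j (Finset.mem_erase.1 hj).1]
      ring
    rw [Finset.sum_congr rfl this, ← Finset.mul_sum]
    have herase : (∑ j ∈ Finset.univ.erase i, (((b:ℝ)^((j:ℕ)+1))⁻¹))
        = g - ((b:ℝ)^((i:ℕ)+1))⁻¹ := by
      have h := Finset.add_sum_erase Finset.univ (fun j : Fin n => (((b:ℝ)^((j:ℕ)+1))⁻¹))
        (Finset.mem_univ i)
      rw [gsum2 hb] at h
      linarith
    rw [herase]
    ring
  rw [Finset.sum_congr rfl (fun i _ => split i), Finset.sum_add_distrib]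
  have part1 : (∑ i : Fin n, ((b:ℝ)^n/(b:ℝ)) * (∑ k : Fin b, ((k:ℕ):ℝ) * ((s i (k:ℕ) : ℕ):ℝ))
      * ((b:ℝ)^(n+1))⁻¹)
      = ((b:ℝ)^n/(b:ℝ)) * ((b:ℝ)^(n+1))⁻¹ *
          ((aCount b n s : ℝ) * ((b:ℝ)*((b:ℝ)-1)*(2*(b:ℝ)-1)/6)
            + ((n:ℝ) - (aCount b n s:ℝ)) * ((b:ℝ)*((b:ℝ)-1)*((b:ℝ)-2)/6)) := by
    have : ∀ i : Fin n, ((b:ℝ)^n/(b:ℝ)) * (∑ k : Fin b, ((k:ℕ):ℝ) * ((s i (k:ℕ) : ℕ):ℝ))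
        * ((b:ℝ)^(n+1))⁻¹
        = (((b:ℝ)^n/(b:ℝ)) * ((b:ℝ)^(n+1))⁻¹) * (∑ k : Fin b, ((k:ℕ):ℝ) * ((s i (k:ℕ) : ℕ):ℝ)) := by
      intro i; ring
    rw [Finset.sum_congr rfl (fun i _ => this i), ← Finset.mul_sum, sum_Q hb s hs]
  have part2 : (∑ i : Fin n, ((b:ℝ)^n/(b:ℝ)^2) * σ * σ *
      ((((b:ℝ)^(n-(i:ℕ)))⁻¹) * (g - ((b:ℝ)^((i:ℕ)+1))⁻¹)))
      = ((b:ℝ)^n/(b:ℝ)^2) * σ^2 * (g^2 - (n:ℝ) * ((b:ℝ)^(n+1))⁻¹) := by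
    have hterm : ∀ i : Fin n, ((b:ℝ)^n/(b:ℝ)^2) * σ * σ *
        ((((b:ℝ)^(n-(i:ℕ)))⁻¹) * (g - ((b:ℝ)^((i:ℕ)+1))⁻¹))
        = (((b:ℝ)^n/(b:ℝ)^2) * σ^2) *
            (g * (((b:ℝ)^(n-(i:ℕ)))⁻¹) - ((b:ℝ)^(n+1))⁻¹) := by
      intro i
      rw [← pairinv i]
      ring
    rw [Finset.sum_congr rfl (fun i _ => hterm i), ← Finset.mul_sum]
    rw [Finset.sum_sub_distrib, ← Finset.mul_sum, gsum1 hb, Finset.sum_const,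
      Finset.card_univ, Fintype.card_fin, nsmul_eq_mul]
    rw [← hg]
    ring
  rw [part1, part2]


/-- Proposition 4.9: the Haar coefficient `μ_{(−1,−1),(0,0),(1,1)}`, i.e. the integral
of the discrepancy function over `[0,1)²`, equals
`(1/4)b^{−2n} + (1/2)b^{−n} + (2aₙ − n)((b²−1)/12)b^{−n−1}`. -/
theorem integral_disc (b n : ℕ) (hb : 2 ≤ b) (hn : 1 ≤ n)
    (s : Fin n → ℕ → ℕ) (hs : IsDigitMaps b n s) :
    (∫ x₁ in Set.Ico (0:ℝ) 1, ∫ x₂ in Set.Ico (0:ℝ) 1, disc b n s x₁ x₂)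
      = (1/4) * (b:ℝ) ^ (-2*(n:ℤ)) + (1/2) * (b:ℝ) ^ (-(n:ℤ))
        + (2 * (aCount b n s : ℝ) - (n:ℝ)) * (((b:ℝ)^2 - 1) / 12) * (b:ℝ) ^ (-(n:ℤ) - 1) := by
  have hb0 : (b:ℝ) ≠ 0 := by positivity
  have hb1 : (1:ℝ) < (b:ℝ) := by exact_mod_cast (by omega : 1 < b)
  have hne : (b:ℝ) - 1 ≠ 0 := by linarith
  have hBn : (b:ℝ)^n ≠ 0 := pow_ne_zero _ hb0
  rw [integral_reduction hb s hs]
  have hexp : (∑ t : Fin n → Fin b, (1 - z1 b n t) * (1 - z2 b n s t))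
      = ((b:ℝ)^n - ∑ t : Fin n → Fin b, z1 b n t - ∑ t : Fin n → Fin b, z2 b n s t)
        + ∑ t : Fin n → Fin b, z1 b n t * z2 b n s t := by
    have : ∀ t : Fin n → Fin b, (1 - z1 b n t) * (1 - z2 b n s t)
        = (1 - z1 b n t - z2 b n s t) + z1 b n t * z2 b n s t := fun t => by ring
    rw [Finset.sum_congr rfl (fun t _ => this t), Finset.sum_add_distrib,
      Finset.sum_sub_distrib, Finset.sum_sub_distrib, Finset.sum_const,
      Finset.card_univ, Fintype.card_fun, Fintype.card_fin, Fintype.card_fin,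
      nsmul_eq_mul, mul_one, Nat.cast_pow]
  rw [hexp, sum_z1 hb, sum_z2 hb s hs, sum_z12 hb s hs]
  have e1 : (b:ℝ) ^ (-(n:ℤ)) = ((b:ℝ)^n)⁻¹ := by
    rw [zpow_neg, zpow_natCast]
  have e2 : (b:ℝ) ^ (-2*(n:ℤ)) = ((b:ℝ)^n * (b:ℝ)^n)⁻¹ := by
    rw [show (-2*(n:ℤ)) = -((n:ℤ)+(n:ℤ)) by ring, zpow_neg, zpow_add₀ hb0, zpow_natCast]
  have e3 : (b:ℝ) ^ (-(n:ℤ) - 1) = ((b:ℝ)^n * (b:ℝ))⁻¹ := by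
    rw [show (-(n:ℤ) - 1) = -((n:ℤ)+1) by ring, zpow_neg, zpow_add₀ hb0, zpow_natCast, zpow_one]
  have e4 : (b:ℝ) ^ (n+1) = (b:ℝ)^n * (b:ℝ) := pow_succ _ _
  rw [e1, e2, e3, e4]
  field_simp
  ring
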